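/- Let Λ ⊆ ℝ^M be a nonempty closed convex set, μ ≥ 0, L > 0 and η = 1/L. Let Q : ℝ^M → ℝ be differentiable with L-Lipschitz gradient and such that h(λ) := Q(λ) − (μ/2)‖λ‖₂² is convex. Fix λ_s ∈ Λ and e ∈ ℝ^M, and let λ_{s+1} = argmin_{λ ∈ Λ} { ⟨∇h(λ_s) + e, λ⟩ + (μ/2)‖λ‖₂² + (1/(2η))‖λ − λ_s‖₂² }. Then for every λ ∈ Λ: ((μ + 1/η)/2) ‖λ − λ_{s+1}‖₂² + Q(λ_{s+1}) ≤ Q(λ) + (1/(2η)) ‖λ − λ_s‖₂² + ‖e‖₂ ‖λ − λ_{s+1}‖₂. -/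

import Mathlib

open scoped RealInnerProductSpace

section Aux

variable {F : Type*} [NormedAddCommGroup F] [InnerProductSpace ℝ F] [CompleteSpace F]

lemma aux_hasGradientAt_norm_sq (x : F) :
    HasGradientAt (fun y : F => ‖y‖ ^ 2) ((2:ℝ) • x) x := by
  rw [hasGradientAt_iff_hasFDerivAt]
  have h := (hasFDerivAt_id x).inner ℝ (hasFDerivAt_id x)
  have h2 : HasFDerivAt (fun y : F => ‖y‖ ^ 2)
      ((fderivInnerCLM ℝ (x, x)).comp ((ContinuousLinearMap.id ℝ F).prod
        (ContinuousLinearMap.id ℝ F))) x := by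
    simpa [real_inner_self_eq_norm_sq] using h
  refine h2.congr_fderiv ?_
  ext v
  simp [fderivInnerCLM_apply, InnerProductSpace.toDual_apply_apply, real_inner_smul_left,
    real_inner_comm]
  ring

lemma aux_hasGradientAt_sub_sq (f : F → ℝ) {x : F} (hf : DifferentiableAt ℝ f x) (μ : ℝ) :
    HasGradientAt (fun y => f y - μ / 2 * ‖y‖ ^ 2) (gradient f x - μ • x) x := by
  have h1 : HasFDerivAt f (InnerProductSpace.toDual ℝ F (gradient f x)) x := by
    rw [← hasGradientAt_iff_hasFDerivAt]; exact hf.hasGradientAt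
  have h2 : HasFDerivAt (fun y : F => ‖y‖ ^ 2)
      (InnerProductSpace.toDual ℝ F ((2:ℝ) • x)) x := by
    rw [← hasGradientAt_iff_hasFDerivAt]; exact aux_hasGradientAt_norm_sq x
  have h3 := h1.sub (h2.const_mul (μ / 2))
  rw [hasGradientAt_iff_hasFDerivAt]
  refine h3.congr_fderiv ?_
  ext v
  simp [InnerProductSpace.toDual_apply_apply, real_inner_smul_left, inner_sub_left]
  ring

lemma aux_convex_grad_le {f : F → ℝ} (hf : ConvexOn ℝ Set.univ f) {x g : F}
    (hg : HasGradientAt f g x) (y : F) : f x + ⟪g, y - x⟫ ≤ f y := by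
  rcases eq_or_ne y x with rfl | hne
  · simp
  set d := y - x with hd
  have hline : ∀ t : ℝ, x + t • d = (AffineMap.lineMap x y : ℝ →ᵃ[ℝ] F) t := by
    intro t; simp only [AffineMap.lineMap_apply, vsub_eq_sub, vadd_eq_add, hd]; module
  set φ : ℝ → ℝ := fun t => f (x + t • d) with hφ
  have hφconv : ConvexOn ℝ Set.univ φ := by
    have := hf.comp_affineMap (AffineMap.lineMap x y : ℝ →ᵃ[ℝ] F)
    simp only [Set.preimage_univ] at this
    refine this.congr fun t _ => ?_
    simp [hφ, hline t, Function.comp]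
  have hc : HasDerivAt (fun t : ℝ => x + t • d) d 0 := by
    simpa using ((hasDerivAt_id (0:ℝ)).smul_const d).const_add x
  have hfd : HasFDerivAt f (InnerProductSpace.toDual ℝ F g) (x + (0:ℝ) • d) := by
    rw [← hasGradientAt_iff_hasFDerivAt] at *
    simpa using hg
  have hder : HasDerivAt φ ⟪g, d⟫ 0 := by
    have := hfd.comp_hasDerivAt 0 hc
    simpa [InnerProductSpace.toDual_apply_apply, Function.comp_def] using this
  have := hφconv.le_slope_of_hasDerivAt (Set.mem_univ 0) (Set.mem_univ 1) zero_lt_one hder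
  rw [slope_def_field] at this
  simp only [hφ, one_smul, zero_smul, add_zero] at this
  have hxd : x + d = y := by rw [hd]; abel
  rw [hxd] at this
  have : ⟪g, d⟫ ≤ f y - f x := by simpa using this
  linarith

lemma aux_smooth_upper {f : F → ℝ} (hf : Differentiable ℝ f) {L : ℝ}
    (hlip : ∀ x y : F, ‖gradient f x - gradient f y‖ ≤ L * ‖x - y‖) (x y : F) :
    f y ≤ f x + ⟪gradient f x, y - x⟫ + L / 2 * ‖y - x‖ ^ 2 := by
  set d := y - x with hd
  set χ : ℝ → ℝ := fun t => f (x + t • d) - t * ⟪gradient f x, d⟫ - L / 2 * ‖d‖ ^ 2 * t ^ 2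
    with hχ
  have hder : ∀ t : ℝ, HasDerivAt χ
      (⟪gradient f (x + t • d), d⟫ - ⟪gradient f x, d⟫ - L / 2 * ‖d‖ ^ 2 * (2 * t)) t := by
    intro t
    have hc : HasDerivAt (fun t : ℝ => x + t • d) d t := by
      simpa using ((hasDerivAt_id t).smul_const d).const_add x
    have hfd : HasFDerivAt f (InnerProductSpace.toDual ℝ F (gradient f (x + t • d)))
        (x + t • d) := by
      rw [← hasGradientAt_iff_hasFDerivAt]
      exact (hf _).hasGradientAt
    have h1 : HasDerivAt (fun t : ℝ => f (x + t • d)) ⟪gradient f (x + t • d), d⟫ t := by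
      simpa [InnerProductSpace.toDual_apply_apply, Function.comp_def] using hfd.comp_hasDerivAt t hc
    have h2 : HasDerivAt (fun t : ℝ => t * ⟪gradient f x, d⟫) ⟪gradient f x, d⟫ t := by
      simpa using (hasDerivAt_id t).mul_const (⟪gradient f x, d⟫ : ℝ)
    have h3 : HasDerivAt (fun t : ℝ => L / 2 * ‖d‖ ^ 2 * t ^ 2)
        (L / 2 * ‖d‖ ^ 2 * (2 * t)) t := by
      have := (hasDerivAt_pow 2 t).const_mul (L / 2 * ‖d‖ ^ 2)
      exact this.congr_deriv (by ring)
    exact (h1.sub h2).sub h3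
  have hmono : AntitoneOn χ (Set.Icc 0 1) := by
    have hcont : ContinuousOn χ (Set.Icc 0 1) :=
      fun t _ => ((hder t).continuousAt).continuousWithinAt
    apply antitoneOn_of_deriv_nonpos (convex_Icc 0 1) hcont
    · rw [interior_Icc]
      exact fun t _ => ((hder t).differentiableAt).differentiableWithinAt
    · rw [interior_Icc]
      intro t ht
      rw [(hder t).deriv]
      have h1 : ⟪gradient f (x + t • d) - gradient f x, d⟫ ≤
          ‖gradient f (x + t • d) - gradient f x‖ * ‖d‖ := real_inner_le_norm _ _
      have h2 : ‖gradient f (x + t • d) - gradient f x‖ ≤ L * (t * ‖d‖) := by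
        have := hlip (x + t • d) x
        simpa [norm_smul, abs_of_pos ht.1, mul_assoc] using this
      have h3 : ⟪gradient f (x + t • d) - gradient f x, d⟫ =
          ⟪gradient f (x + t • d), d⟫ - ⟪gradient f x, d⟫ := inner_sub_left _ _ _
      have hd0 : (0:ℝ) ≤ ‖d‖ := norm_nonneg _
      nlinarith [mul_le_mul_of_nonneg_right h2 hd0]
  have := hmono (Set.mem_Icc.mpr ⟨le_refl 0, zero_le_one⟩)
    (Set.mem_Icc.mpr ⟨zero_le_one, le_refl 1⟩) zero_le_one
  simp only [hχ, one_smul, zero_smul, add_zero, one_mul, one_pow, mul_one, zero_mul,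
    zero_pow, sub_zero, mul_zero] at this
  have hxd : x + d = y := by rw [hd]; abel
  rw [hxd] at this
  linarith

lemma aux_strong_min {Λ : Set F} (hconv : Convex ℝ Λ) (c lamS lamNext : F) {μ κ : ℝ}
    (hNmem : lamNext ∈ Λ)
    (hmin : IsMinOn (fun x => ⟪c, x⟫ + μ / 2 * ‖x‖ ^ 2 + κ / 2 * ‖x - lamS‖ ^ 2) Λ lamNext)
    {lam : F} (hlam : lam ∈ Λ) :
    ⟪c, lamNext⟫ + μ / 2 * ‖lamNext‖ ^ 2 + κ / 2 * ‖lamNext - lamS‖ ^ 2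
      + (μ + κ) / 2 * ‖lam - lamNext‖ ^ 2
      ≤ ⟪c, lam⟫ + μ / 2 * ‖lam‖ ^ 2 + κ / 2 * ‖lam - lamS‖ ^ 2 := by
  set G : F → ℝ := fun x => ⟪c, x⟫ + μ / 2 * ‖x‖ ^ 2 + κ / 2 * ‖x - lamS‖ ^ 2 with hG
  set d := lam - lamNext with hd
  set A : ℝ := ⟪c, d⟫ + μ * ⟪lamNext, d⟫ + κ * ⟪lamNext - lamS, d⟫ with hA
  set B : ℝ := (μ + κ) / 2 * ‖d‖ ^ 2 with hB
  have key : ∀ t : ℝ, G (lamNext + t • d) = G lamNext + t * A + t ^ 2 * B := by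
    intro t
    have e0 : ∀ v : F, ‖v + t • d‖ ^ 2 = ‖v‖ ^ 2 + 2 * (t * ⟪v, d⟫) + t ^ 2 * ‖d‖ ^ 2 := by
      intro v
      rw [norm_add_sq_real, real_inner_smul_right, norm_smul]
      simp [mul_pow, sq_abs]
    have e1 := e0 lamNext
    have e2 : ‖lamNext + t • d - lamS‖ ^ 2
        = ‖lamNext - lamS‖ ^ 2 + 2 * (t * ⟪lamNext - lamS, d⟫) + t ^ 2 * ‖d‖ ^ 2 := by
      rw [show lamNext + t • d - lamS = (lamNext - lamS) + t • d by abel]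
      exact e0 (lamNext - lamS)
    have e3 : ⟪c, lamNext + t • d⟫ = ⟪c, lamNext⟫ + t * ⟪c, d⟫ := by
      rw [inner_add_right, real_inner_smul_right]
    simp only [hG, e1, e2, e3, hA, hB]
    ring
  have mem : ∀ t ∈ Set.Ioc (0:ℝ) 1, lamNext + t • d ∈ Λ := by
    intro t ht
    have := hconv hNmem hlam (by linarith [ht.2] : (0:ℝ) ≤ 1 - t) (le_of_lt ht.1) (by ring)
    convert this using 1
    rw [hd]; module
  have hAnonneg : 0 ≤ A := by
    have hev : ∀ᶠ t in nhdsWithin (0:ℝ) (Set.Ioi 0), 0 ≤ A + t * B := by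
      filter_upwards [Ioo_mem_nhdsGT (zero_lt_one' ℝ)]
        with t ht
      have hmem := mem t ⟨ht.1, le_of_lt ht.2⟩
      have hge : G lamNext ≤ G (lamNext + t • d) := hmin hmem
      rw [key t] at hge
      have h2 : 0 ≤ t * A + t ^ 2 * B := by linarith
      have h3 : 0 ≤ t * (A + t * B) := by nlinarith
      exact nonneg_of_mul_nonneg_right h3 ht.1
    have htend : Filter.Tendsto (fun t : ℝ => A + t * B) (nhdsWithin 0 (Set.Ioi 0))
        (nhds A) := by
      have : Continuous (fun t : ℝ => A + t * B) := by continuity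
      simpa using (this.tendsto 0).mono_left nhdsWithin_le_nhds
    exact ge_of_tendsto htend hev
  have h1 := key 1
  simp only [one_smul, one_pow, one_mul] at h1
  have h2 : lamNext + d = lam := by rw [hd]; abel
  rw [h2] at h1
  simp only [hG] at h1 ⊢
  linarith [hAnonneg, h1.ge, h1.le]

end Aux

/-- one-step inequality for inexact proximal gradient
descent, Eq. (proof-inexact-md-4) in the proof of Lemma 9 of the paper: let
`Λ` be nonempty closed convex, `μ ≥ 0`, `L > 0`, `η = 1/L`, and `Q`
differentiable with `L`-Lipschitz gradient such that
`h(λ) = Q(λ) − (μ/2)‖λ‖²` is convex. If `λ_{s+1}` minimizes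
`λ ↦ ⟨∇h(λ_s) + e, λ⟩ + (μ/2)‖λ‖² + (1/(2η))‖λ − λ_s‖²` over `Λ`, then for
every `λ ∈ Λ`,
`((μ + 1/η)/2)‖λ − λ_{s+1}‖² + Q(λ_{s+1})
  ≤ Q(λ) + (1/(2η))‖λ − λ_s‖² + ‖e‖ ‖λ − λ_{s+1}‖`. -/
theorem stmt_15 {M : ℕ}
    (Λ : Set (EuclideanSpace ℝ (Fin M)))
    (hΛne : Λ.Nonempty) (hΛcl : IsClosed Λ) (hΛconv : Convex ℝ Λ)
    (μ : ℝ) (hμ : 0 ≤ μ) (L : ℝ) (hL : 0 < L) (η : ℝ) (hη : η = 1 / L)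
    (Q : EuclideanSpace ℝ (Fin M) → ℝ) (hQdiff : Differentiable ℝ Q)
    (hQlip : ∀ x y : EuclideanSpace ℝ (Fin M),
      ‖gradient Q x - gradient Q y‖ ≤ L * ‖x - y‖)
    (hhconv : ConvexOn ℝ Set.univ (fun x => Q x - μ / 2 * ‖x‖ ^ 2))
    (lamS : EuclideanSpace ℝ (Fin M)) (hlamS : lamS ∈ Λ)
    (e : EuclideanSpace ℝ (Fin M))
    (lamNext : EuclideanSpace ℝ (Fin M)) (hNmem : lamNext ∈ Λ)
    (hNmin : IsMinOn
      (fun x => ⟪gradient (fun y => Q y - μ / 2 * ‖y‖ ^ 2) lamS + e, x⟫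
        + μ / 2 * ‖x‖ ^ 2 + 1 / (2 * η) * ‖x - lamS‖ ^ 2) Λ lamNext) :
    ∀ lam ∈ Λ,
      (μ + 1 / η) / 2 * ‖lam - lamNext‖ ^ 2 + Q lamNext
        ≤ Q lam + 1 / (2 * η) * ‖lam - lamS‖ ^ 2 + ‖e‖ * ‖lam - lamNext‖ := by
  intro lam hlam
  have hη0 : 0 < η := by rw [hη]; positivity
  have hηL : 1 / η = L := by rw [hη]; field_simp
  set gQ := gradient Q lamS with hgQ
  have hgradh : HasGradientAt (fun y => Q y - μ / 2 * ‖y‖ ^ 2) (gQ - μ • lamS) lamS :=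
    aux_hasGradientAt_sub_sq Q (hQdiff lamS) μ
  set gh := gQ - μ • lamS with hghdef
  have hgh : gradient (fun y => Q y - μ / 2 * ‖y‖ ^ 2) lamS = gh :=
    hgradh.gradient
  have hmin' : IsMinOn (fun x => ⟪gh + e, x⟫ + μ / 2 * ‖x‖ ^ 2
      + 1 / η / 2 * ‖x - lamS‖ ^ 2) Λ lamNext := by
    have hfun : (fun x : EuclideanSpace ℝ (Fin M) =>
        ⟪gradient (fun y => Q y - μ / 2 * ‖y‖ ^ 2) lamS + e, x⟫
          + μ / 2 * ‖x‖ ^ 2 + 1 / (2 * η) * ‖x - lamS‖ ^ 2)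
        = (fun x => ⟪gh + e, x⟫ + μ / 2 * ‖x‖ ^ 2 + 1 / η / 2 * ‖x - lamS‖ ^ 2) := by
      funext x
      rw [hgh]
      ring
    rwa [hfun] at hNmin
  have h3 := aux_strong_min hΛconv (gh + e) lamS lamNext hNmem hmin' hlam
  have h1 : Q lamS - μ / 2 * ‖lamS‖ ^ 2 + ⟪gh, lam - lamS⟫ ≤ Q lam - μ / 2 * ‖lam‖ ^ 2 :=
    aux_convex_grad_le hhconv hgradh lam
  have h2 : Q lamNext ≤ Q lamS + ⟪gQ, lamNext - lamS⟫ + L / 2 * ‖lamNext - lamS‖ ^ 2 :=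
    aux_smooth_upper hQdiff hQlip lamS lamNext
  -- inner product identities
  have iA : ⟪gh + e, lam⟫ - ⟪gh + e, lamNext⟫
      = ⟪gh, lam - lamNext⟫ + ⟪e, lam - lamNext⟫ := by
    rw [inner_add_left, inner_add_left, inner_sub_right, inner_sub_right]; ring
  have iB : ⟪gh, lam - lamS⟫ = ⟪gh, lam - lamNext⟫ + ⟪gh, lamNext - lamS⟫ := by
    rw [show lam - lamS = (lam - lamNext) + (lamNext - lamS) by abel, inner_add_right]
  have igQ : gQ = gh + μ • lamS := by rw [hghdef]; abel
  have iC : ⟪gQ, lamNext - lamS⟫ = ⟪gh, lamNext - lamS⟫ + μ * ⟪lamS, lamNext - lamS⟫ := by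
    rw [igQ, inner_add_left, real_inner_smul_left]
  have iD : μ * ⟪lamS, lamNext - lamS⟫ = μ * ⟪lamS, lamNext⟫ - μ * ‖lamS‖ ^ 2 := by
    rw [inner_sub_right, real_inner_self_eq_norm_sq]; ring
  have iE : μ * ‖lamNext - lamS‖ ^ 2
      = μ * ‖lamNext‖ ^ 2 - 2 * (μ * ⟪lamS, lamNext⟫) + μ * ‖lamS‖ ^ 2 := by
    rw [norm_sub_sq_real, real_inner_comm]; ring
  have iF : 0 ≤ μ * ‖lamNext - lamS‖ ^ 2 := mul_nonneg hμ (sq_nonneg _)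
  have iG : ⟪e, lam - lamNext⟫ ≤ ‖e‖ * ‖lam - lamNext‖ := real_inner_le_norm _ _
  have p1 : 1 / (2 * η) * ‖lam - lamS‖ ^ 2 = 1 / η / 2 * ‖lam - lamS‖ ^ 2 := by
    rw [show (1:ℝ) / (2 * η) = 1 / η / 2 by ring]
  have p2 : 1 / η / 2 * ‖lamNext - lamS‖ ^ 2 = L / 2 * ‖lamNext - lamS‖ ^ 2 := by
    rw [hηL]
  linarith
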